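/- Let R be a reduced N-graded ring with R_0 a field k, and let R^sn be a ring between R and its total quotient ring such that the inclusion R ⊆ R^sn induces a bijection on prime spectra and isomorphisms of residue fields. If the degree-0 part R^sn_0 of the induced grading is a reduced Artinian local ring, then R^sn_0 = k. -/

import Mathlib

set_option synthInstance.maxHeartbeats 1000000 in
/-- Let `R` be a reduced `ℕ`-graded ring with `R₀ = k` a field, and let `R^sn` be a ring
between `R` and its total quotient ring such that `Spec R^sn → Spec R` is a bijection
inducing isomorphisms of residue fields (here: the residue field extensions are trivial,
i.e. `κ(P ∩ R) → κ(P)` is surjective for every prime `P` of `R^sn`).  If the degree-`0`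
part of the induced grading on `R^sn` is a reduced Artinian local ring, then `R^sn₀ = k`,
i.e. the degree-`0` part of `R^sn` is exactly the image of `R₀`. -/
theorem seminormalization_degree_zero_eq_base_field
    (R Rsn : Type*) [CommRing R] [CommRing Rsn] [IsReduced R]
    (𝒜 : ℕ → AddSubgroup R) [GradedRing 𝒜] (hk : IsField ↥(𝒜 0))
    (ℬ : ℕ → AddSubgroup Rsn) [GradedRing ℬ]
    (f : R →+* Rsn) (hf : Function.Injective f)
    (g : Rsn →+* FractionRing R) (hg : Function.Injective g)
    (hgf : g.comp f = algebraMap R (FractionRing R))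
    (hgr : ∀ (i : ℕ), ∀ x ∈ 𝒜 i, f x ∈ ℬ i)
    (hspec : Function.Bijective fun P : PrimeSpectrum Rsn => PrimeSpectrum.comap f P)
    (hres : ∀ (P : Ideal Rsn), P.IsPrime → ∀ y : Rsn,
      ∃ a b : R, f b ∉ P ∧ y * f b - f a ∈ P)
    [IsReduced ↥(ℬ 0)] [IsArtinianRing ↥(ℬ 0)] [IsLocalRing ↥(ℬ 0)] :
    ∀ y ∈ ℬ 0, ∃ x ∈ 𝒜 0, f x = y := by
  -- ℬ 0 is a field
  have hB : IsField ↥(ℬ 0) := by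
    rw [IsLocalRing.isField_iff_maximalIdeal_eq]
    obtain ⟨n, hn⟩ := IsArtinianRing.isNilpotent_jacobson_bot (R := ↥(ℬ 0))
    rw [IsLocalRing.jacobson_eq_maximalIdeal ⊥ bot_ne_top] at hn
    ext x
    simp only [Ideal.mem_bot]
    constructor
    · intro hx
      have : x ^ n = 0 := by
        have := Ideal.pow_mem_pow hx n
        rw [hn] at this
        simpa using this
      exact IsReduced.eq_zero x ⟨n, this⟩
    · rintro rfl; exact Submodule.zero_mem _
  letI : Field ↥(ℬ 0) := hB.toField
  letI : IsDomain ↥(ℬ 0) := Field.isDomain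
  -- the projection onto degree 0 as a ring hom, kernel is prime
  set π := GradedRing.projZeroRingHom' ℬ with hπ
  have hP : (RingHom.ker π).IsPrime := RingHom.ker_isPrime π
  intro y hy
  obtain ⟨a, b, hb, hab⟩ := hres (RingHom.ker π) hP y
  -- projection commutes with f
  have key : ∀ r : R, GradedRing.projZeroRingHom ℬ (f r)
      = f (GradedRing.projZeroRingHom 𝒜 r) := by
    intro r
    induction r using DirectSum.Decomposition.inductionOn 𝒜 with
    | zero => simp
    | @homogeneous i m =>
        rcases Nat.eq_zero_or_pos i with hi | hi
        · subst hi
          rw [GradedRing.projZeroRingHom_apply, GradedRing.projZeroRingHom_apply,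
            DirectSum.decompose_of_mem_same ℬ (hgr 0 m m.2),
            DirectSum.decompose_of_mem_same 𝒜 m.2]
        · rw [GradedRing.projZeroRingHom_apply, GradedRing.projZeroRingHom_apply,
            DirectSum.decompose_of_mem_ne ℬ (hgr i m m.2) hi.ne',
            DirectSum.decompose_of_mem_ne 𝒜 m.2 hi.ne', map_zero]
    | add x y hx hy => simp only [map_add, hx, hy]
  -- degree-0 components
  set b0 : ↥(𝒜 0) := GradedRing.projZeroRingHom' 𝒜 b with hb0
  set a0 : ↥(𝒜 0) := GradedRing.projZeroRingHom' 𝒜 a with ha0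
  have hker : ∀ z : Rsn, z ∈ RingHom.ker π ↔ GradedRing.projZeroRingHom ℬ z = 0 := by
    intro z
    rw [RingHom.mem_ker, hπ]
    constructor
    · intro h
      have := congrArg (Subtype.val) h
      simpa using this
    · intro h; ext; simpa using h
  have hbne : (b0 : R) ≠ 0 := by
    intro h0
    apply hb
    rw [hker, key]
    have : f (b0 : R) = 0 := by rw [h0, map_zero]
    simpa [hb0] using this
  have hyeq : GradedRing.projZeroRingHom ℬ (y * f b) = GradedRing.projZeroRingHom ℬ (f a) := by
    have := (hker _).mp hab
    rw [map_sub, sub_eq_zero] at this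
    exact this
  have hy0 : GradedRing.projZeroRingHom ℬ y = y :=
    by rw [GradedRing.projZeroRingHom_apply, DirectSum.decompose_of_mem_same ℬ hy]
  have hmain : y * f (b0 : R) = f (a0 : R) := by
    have := hyeq
    rw [map_mul, hy0, key, key] at this
    simpa [hb0, ha0] using this
  -- invert b0 in the field 𝒜 0
  obtain ⟨c, hc⟩ := hk.mul_inv_cancel (a := b0) (fun h0 => hbne (by simp [h0]))
  refine ⟨(a0 * c : ↥(𝒜 0)), (a0 * c : ↥(𝒜 0)).2, ?_⟩
  have hcoe : ((a0 * c : ↥(𝒜 0)) : R) = (a0 : R) * (c : R) := rfl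
  have h1 : ((b0 * c : ↥(𝒜 0)) : R) = 1 := by rw [hc]; rfl
  have h1' : (b0 : R) * (c : R) = 1 := h1
  calc f ((a0 * c : ↥(𝒜 0)) : R) = f (a0 : R) * f (c : R) := by rw [hcoe, map_mul]
    _ = y * f (b0 : R) * f (c : R) := by rw [hmain]
    _ = y * f ((b0 : R) * (c : R)) := by rw [map_mul]; ring
    _ = y := by rw [h1', map_one, mul_one]
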